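/- If H is an Egerváry graph, R is a matchable König-Egerváry graph vertex-disjoint from H, I is a maximum independent set of R, and G is formed from the disjoint union of H and R by adding any set of edges joining vertices of H to vertices of N_R(I), then G is Egerváry. -/

import Mathlib

open SimpleGraph

variable {V : Type*}

/-- A graph has a perfect matching. -/
def HasPM (G : SimpleGraph V) : Prop := ∃ M : G.Subgraph, M.IsPerfectMatching

/-- A set of vertices is independent (pairwise nonadjacent). -/
def IsIndep (G : SimpleGraph V) (s : Set V) : Prop := ∀ x ∈ s, ∀ y ∈ s, ¬ G.Adj x y

/-- The independence number. -/
noncomputable def alphaNum (G : SimpleGraph V) : ℕ :=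
  sSup {n | ∃ s : Set V, IsIndep G s ∧ s.ncard = n}

/-- The matching number. -/
noncomputable def matchNum (G : SimpleGraph V) : ℕ :=
  sSup {n | ∃ M : G.Subgraph, M.IsMatching ∧ M.edgeSet.ncard = n}

/-- A graph is König-Egerváry if α + ν = n. -/
def IsKE (G : SimpleGraph V) : Prop := alphaNum G + matchNum G = Nat.card V

/-- `G` is (the whole graph) an even subdivision of `K₄`: four corner vertices and six
internally disjoint odd paths joining each pair of corners, comprising all vertices
and edges of `G`. -/
def IsEvenSubdivK4 (G : SimpleGraph V) : Prop :=
  ∃ (c : Fin 4 → V) (P : ∀ i j : Fin 4, G.Walk (c i) (c j)),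
    Function.Injective c ∧
    (∀ i j : Fin 4, P j i = (P i j).reverse) ∧
    (∀ i j : Fin 4, i ≠ j → (P i j).IsPath ∧ Odd (P i j).length) ∧
    (∀ i j k l : Fin 4, i ≠ j → k ≠ l → ¬(i = k ∧ j = l) → ¬(i = l ∧ j = k) →
      ∀ x : V, x ∈ (P i j).support → x ∈ (P k l).support → x ∈ Set.range c) ∧
    (∀ x : V, ∃ i j : Fin 4, i ≠ j ∧ x ∈ (P i j).support) ∧
    (∀ e : Sym2 V, e ∈ G.edgeSet ↔ ∃ i j : Fin 4, i ≠ j ∧ e ∈ (P i j).edges)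

/-- `G` is (the whole graph) an even subdivision of `T`: two vertex-disjoint odd cycles
joined at blossom tips `v`, `w` by an odd path internally disjoint from the cycles,
comprising all vertices and edges of `G`. -/
def IsEvenSubdivT (G : SimpleGraph V) : Prop :=
  ∃ (v w : V) (C1 : G.Walk v v) (C2 : G.Walk w w) (P : G.Walk v w),
    C1.IsCycle ∧ C2.IsCycle ∧ Odd C1.length ∧ Odd C2.length ∧
    P.IsPath ∧ Odd P.length ∧
    (∀ x : V, x ∈ C1.support → x ∉ C2.support) ∧
    (∀ x : V, x ∈ P.support → x ∈ C1.support → x = v) ∧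
    (∀ x : V, x ∈ P.support → x ∈ C2.support → x = w) ∧
    (∀ x : V, x ∈ C1.support ∨ x ∈ C2.support ∨ x ∈ P.support) ∧
    (∀ e : Sym2 V, e ∈ G.edgeSet ↔ e ∈ C1.edges ∨ e ∈ C2.edges ∨ e ∈ P.edges)

/-- `G` contains a nice even subdivision of `T`: a subgraph `H` which is an even
subdivision of `T` and such that `G - V(H)` has a perfect matching. -/
def HasNiceEvenSubdivT (G : SimpleGraph V) : Prop :=
  ∃ H : G.Subgraph, IsEvenSubdivT H.coe ∧ HasPM (G.induce (H.vertsᶜ))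

/-- `G` has a spanning subgraph whose components are independent edges together with a
positive number of vertex-disjoint odd cycles. -/
def HasOddCycleCover (G : SimpleGraph V) : Prop :=
  ∃ (M : G.Subgraph) (k : ℕ) (u : Fin k → V) (C : ∀ i : Fin k, G.Walk (u i) (u i)),
    0 < k ∧ M.IsMatching ∧
    (∀ i, (C i).IsCycle ∧ Odd (C i).length) ∧
    (∀ i j, i ≠ j → ∀ x : V, x ∈ (C i).support → x ∉ (C j).support) ∧
    (∀ i, ∀ x ∈ (C i).support, x ∉ M.verts) ∧
    (∀ x : V, x ∈ M.verts ∨ ∃ i, x ∈ (C i).support)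

/-- A matchable graph is Egerváry iff it has no such spanning cover. -/
def IsEgervary (G : SimpleGraph V) : Prop := ¬ HasOddCycleCover G

/-- `G` contains two vertex-disjoint odd cycles. -/
def TwoDisjointOddCycles (G : SimpleGraph V) : Prop :=
  ∃ (a b : V) (C1 : G.Walk a a) (C2 : G.Walk b b),
    C1.IsCycle ∧ C2.IsCycle ∧ Odd C1.length ∧ Odd C2.length ∧
    ∀ x : V, x ∈ C1.support → x ∉ C2.support

/-- `G` is α-critical: deleting any edge increases the independence number. -/
def AlphaCritical (G : SimpleGraph V) : Prop :=
  ∀ e ∈ G.edgeSet, alphaNum (G.deleteEdges {e}) = alphaNum G + 1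

/-- The (open) neighborhood of a set of vertices. -/
def setN (G : SimpleGraph V) (I : Set V) : Set V := {x | x ∉ I ∧ ∃ y ∈ I, G.Adj x y}

section AuxWalk
variable {V : Type*} {G : SimpleGraph V} {A : Set V}


lemma getVert_eq_support_get {a b : V} (p : G.Walk a b) (n : ℕ) (hn : n < p.support.length) :
    p.support[n] = p.getVert n := by
  induction p generalizing n with
  | nil => simp at hn; simp [hn]
  | cons h q ih =>
    cases n with
    | zero => simp only [Walk.support_cons, List.getElem_cons_zero, Walk.getVert_zero]
    | succ n =>
      simp only [Walk.support_cons, List.getElem_cons_succ, Walk.getVert_cons_succ]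
      have hn' : n < q.support.length := by
        simp [Walk.length_support, Walk.length_cons] at hn ⊢
        omega
      exact ih n hn'

lemma getVert_mem_support {a b : V} (p : G.Walk a b) (n : ℕ) :
    p.getVert n ∈ p.support := by
  rcases le_or_gt n p.length with h | h
  · exact Walk.mem_support_iff_exists_getVert.2 ⟨n, rfl, h⟩
  · rw [Walk.getVert_of_length_le _ h.le]; exact p.end_mem_support

lemma IsPath.getVert_inj {a b : V} {p : G.Walk a b} (hp : p.IsPath) {i j : ℕ}
    (hi : i ≤ p.length) (hj : j ≤ p.length) (h : p.getVert i = p.getVert j) : i = j := by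
  have hi' : i < p.support.length := by rw [Walk.length_support]; omega
  have hj' : j < p.support.length := by rw [Walk.length_support]; omega
  have := hp.support_nodup
  rw [← getVert_eq_support_get p i hi', ← getVert_eq_support_get p j hj'] at h
  exact (List.Nodup.getElem_inj_iff this).1 h

lemma cycle_getVert_injOn' {u : V} {C : G.Walk u u} (hC : C.IsCycle) {i j : ℕ}
    (hi1 : 1 ≤ i) (hi2 : i ≤ C.length) (hj1 : 1 ≤ j) (hj2 : j ≤ C.length)
    (h : C.getVert i = C.getVert j) : i = j := by
  have hlen := hC.three_le_length
  have hsl : C.support.length = C.length + 1 := Walk.length_support _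
  have hi' : i < C.support.length := by omega
  have hj' : j < C.support.length := by omega
  rw [← getVert_eq_support_get C i hi', ← getVert_eq_support_get C j hj'] at h
  have htail : C.support[i] = C.support.tail[i-1]'(by
      rw [List.length_tail, hsl]; omega) := by
    rw [List.getElem_tail]
    congr 1
    omega
  have htail' : C.support[j] = C.support.tail[j-1]'(by
      rw [List.length_tail, hsl]; omega) := by
    rw [List.getElem_tail]
    congr 1
    omega
  rw [htail, htail'] at h
  have := (List.Nodup.getElem_inj_iff hC.support_nodup).1 h
  omega

lemma cycle_getVert_injOn {u : V} {C : G.Walk u u} (hC : C.IsCycle) {i j : ℕ}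
    (hi : i < C.length) (hj : j < C.length)
    (h : C.getVert i = C.getVert j) : i = j := by
  have hlen := hC.three_le_length
  rcases Nat.eq_zero_or_pos i with rfl | hi1
  · rcases Nat.eq_zero_or_pos j with rfl | hj1
    · rfl
    · rw [Walk.getVert_zero] at h
      have h' : C.getVert C.length = C.getVert j := by rw [Walk.getVert_length]; exact h
      have := cycle_getVert_injOn' hC (by omega) (le_refl _) hj1 hj.le h'
      omega
  · rcases Nat.eq_zero_or_pos j with rfl | hj1
    · rw [Walk.getVert_zero] at h
      have h' : C.getVert i = C.getVert C.length := by rw [Walk.getVert_length]; exact h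
      have := cycle_getVert_injOn' hC hi1 hi.le (by omega) (le_refl _) h'
      omega
    · exact cycle_getVert_injOn' hC hi1 hi.le hj1 hj.le h

lemma exists_getVert_lt {u v : V} (C : G.Walk u u) (h0 : 0 < C.length)
    (hv : v ∈ C.support) : ∃ n, n < C.length ∧ C.getVert n = v := by
  obtain ⟨n, hn, hn'⟩ := Walk.mem_support_iff_exists_getVert.1 hv
  rcases Nat.lt_or_ge n C.length with h | h
  · exact ⟨n, h, hn⟩
  · refine ⟨0, h0, ?_⟩
    rw [Walk.getVert_zero]
    rw [← hn, Walk.getVert_of_length_le _ h]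

open Classical in
noncomputable def cycNext {u : V} (C : G.Walk u u) (v : V) : V :=
  if h : ∃ n, n < C.length ∧ C.getVert n = v then C.getVert (h.choose + 1) else v

lemma cycNext_spec {u v : V} {C : G.Walk u u} (h0 : 0 < C.length) (hv : v ∈ C.support) :
    ∃ n, n < C.length ∧ C.getVert n = v ∧ cycNext C v = C.getVert (n + 1) := by
  have h := exists_getVert_lt C h0 hv
  exact ⟨h.choose, h.choose_spec.1, h.choose_spec.2, by classical rw [cycNext]; rw [dif_pos h]⟩

lemma cycNext_adj {u v : V} {C : G.Walk u u} (h0 : 0 < C.length) (hv : v ∈ C.support) :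
    G.Adj v (cycNext C v) := by
  obtain ⟨n, hn, rfl, h⟩ := cycNext_spec h0 hv
  rw [h]; exact C.adj_getVert_succ hn

lemma cycNext_mem {u v : V} {C : G.Walk u u} (h0 : 0 < C.length) (hv : v ∈ C.support) :
    cycNext C v ∈ C.support := by
  obtain ⟨n, hn, rfl, h⟩ := cycNext_spec h0 hv
  rw [h]; exact getVert_mem_support _ _

lemma cycNext_eq_getVert {u v : V} {C : G.Walk u u} (hC : C.IsCycle) {r : ℕ}
    (hr : r < C.length) (hv : v ∈ C.support) (h : cycNext C v = C.getVert r) :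
    v = C.getVert ((r + C.length - 1) % C.length) := by
  have hlen := hC.three_le_length
  obtain ⟨n, hn, hnv, hcn⟩ := cycNext_spec (by omega) hv
  rw [hcn] at h
  rcases Nat.eq_zero_or_pos r with rfl | hr1
  · have h' : C.getVert (n+1) = C.getVert C.length := by
      rw [Walk.getVert_length]; rw [h, Walk.getVert_zero]
    have := cycle_getVert_injOn' hC (by omega) (by omega) (by omega) (le_refl _) h'
    have hn' : n = (0 + C.length - 1) % C.length := by
      rw [Nat.mod_eq_of_lt (by omega)]; omega
    rw [← hn', hnv]
  · have := cycle_getVert_injOn' hC (by omega) (by omega) (by omega) hr.le h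
    have hn' : n = (r + C.length - 1) % C.length := by
      have : r + C.length - 1 = (r - 1) + C.length := by omega
      rw [this, Nat.add_mod_right, Nat.mod_eq_of_lt (by omega)]
      omega
    rw [← hn', hnv]

lemma cycNext_injOn {u : V} {C : G.Walk u u} (hC : C.IsCycle) {v w : V}
    (hv : v ∈ C.support) (hw : w ∈ C.support) (h : cycNext C v = cycNext C w) : v = w := by
  have hlen := hC.three_le_length
  obtain ⟨n, hn, hnv, hcn⟩ := cycNext_spec (by omega) hw
  rw [hcn] at h
  rcases Nat.lt_or_ge (n+1) C.length with h1 | h1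
  · have := cycNext_eq_getVert hC h1 hv h
    rw [this, ← hnv]
    congr 1
    have : n + 1 + C.length - 1 = n + C.length := by omega
    rw [this, Nat.add_mod_right, Nat.mod_eq_of_lt hn]
  · have hn1 : n + 1 = C.length := by omega
    have h' : cycNext C v = C.getVert 0 := by
      rw [h, hn1, Walk.getVert_length, Walk.getVert_zero]
    have := cycNext_eq_getVert hC (by omega) hv h'
    rw [this, ← hnv]
    congr 1
    rw [Nat.mod_eq_of_lt (by omega)]
    omega
lemma adj_getVert_pred {u : V} {C : G.Walk u u} (hC : 3 ≤ C.length) {q : ℕ}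
    (hq : q < C.length) :
    G.Adj (C.getVert ((q + C.length - 1) % C.length)) (C.getVert q) := by
  rcases Nat.eq_zero_or_pos q with rfl | hq1
  · rw [Nat.mod_eq_of_lt (by omega)]
    have := C.adj_getVert_succ (i := C.length - 1) (by omega)
    have h2 : C.length - 1 + 1 = C.length := by omega
    rw [h2, Walk.getVert_length] at this
    simpa using this
  · have h2 : (q + C.length - 1) % C.length = q - 1 := by
      have : q + C.length - 1 = (q - 1) + C.length := by omega
      rw [this, Nat.add_mod_right, Nat.mod_eq_of_lt (by omega)]
    rw [h2]
    have := C.adj_getVert_succ (i := q - 1) (by omega)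
    have h3 : q - 1 + 1 = q := by omega
    rwa [h3] at this

lemma parity_no_I {u : V} {C : G.Walk u u} (hC : C.IsCycle) (hodd : Odd C.length)
    {I J : Set V}
    (hIJ : ∀ x, x ∈ I → x ∉ J)
    (hadjI : ∀ x y, G.Adj x y → y ∈ I → x ∈ J)
    (hpred : ∀ y ∈ C.support, y ∈ J → ∃ w, w ∈ I ∧ w ∈ C.support ∧ cycNext C w = y) :
    ∀ x ∈ C.support, x ∉ I := by
  have hlen := hC.three_le_length
  set m := C.length with hm
  have hm0 : 0 < m := by omega
  intro x hx hxI
  obtain ⟨p, hp, hpx⟩ := exists_getVert_lt C hm0 hx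
  -- the key step: going back two positions stays in I
  have step : ∀ q, q < m → C.getVert q ∈ I → C.getVert ((q + (m - 2)) % m) ∈ I := by
    intro q hq hqI
    have hpredJ : C.getVert ((q + m - 1) % m) ∈ J :=
      hadjI _ _ (adj_getVert_pred hlen hq) hqI
    obtain ⟨w, hwI, hwC, hwn⟩ := hpred _ (getVert_mem_support _ _) hpredJ
    have hr : (q + m - 1) % m < m := Nat.mod_lt _ hm0
    have := cycNext_eq_getVert hC hr hwC hwn
    have heq : ((q + m - 1) % m + m - 1) % m = (q + (m - 2)) % m := by
      have e1 : (q + m - 1) % m + m - 1 = (q + m - 1) % m + (m - 1) := by omega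
      rw [e1, Nat.mod_add_mod]
      have e2 : q + m - 1 + (m - 1) = (q + (m - 2)) + m := by omega
      rw [e2, Nat.add_mod_right]
    rw [heq] at this
    rwa [← this]
  have aux : ∀ k, C.getVert ((p + k * (m - 2)) % m) ∈ I := by
    intro k
    induction k with
    | zero =>
      simp only [Nat.zero_mul, Nat.add_zero]
      rw [Nat.mod_eq_of_lt hp, hpx]; exact hxI
    | succ k ih =>
      have hq : (p + k * (m - 2)) % m < m := Nat.mod_lt _ hm0
      have := step _ hq ih
      have heq : ((p + k * (m - 2)) % m + (m - 2)) % m = (p + (k + 1) * (m - 2)) % m := by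
        rw [Nat.mod_add_mod]
        congr 1
        ring
      rwa [heq] at this
  obtain ⟨s, hs⟩ := hodd
  have hs1 : 1 ≤ s := by omega
  have key := aux (s + 1)
  have heq : (p + (s + 1) * (m - 2)) % m = (p + m - 1) % m := by
    obtain ⟨t, rfl⟩ := Nat.exists_eq_add_of_le hs1
    have e1 : m - 2 = 2 * t + 1 := by omega
    have e2 : p + (1 + t + 1) * (2 * t + 1) = (p + m - 1) + t * m := by
      have e3 : p + m - 1 = p + 2 * t + 2 := by omega
      rw [e3, hs]; ring
    rw [e1, e2, Nat.add_mul_mod_self_right]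
  rw [heq] at key
  have hpredJ : C.getVert ((p + m - 1) % m) ∈ J :=
    hadjI _ _ (adj_getVert_pred hlen hp) (by rw [hpx]; exact hxI)
  exact hIJ _ key hpredJ



def induceW : ∀ {a b : V} (p : G.Walk a b) (h : ∀ x ∈ p.support, x ∈ A),
    (G.induce A).Walk ⟨a, h a p.start_mem_support⟩ ⟨b, h b p.end_mem_support⟩
  | _, _, Walk.nil, _ => Walk.nil
  | _, _, Walk.cons hadj q, h =>
      Walk.cons (by exact hadj)
        (induceW q (fun x hx => h x (by simp [Walk.support_cons, hx])))

@[simp] lemma induceW_length {a b : V} (p : G.Walk a b) (h : ∀ x ∈ p.support, x ∈ A) :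
    (induceW p h).length = p.length := by
  induction p with
  | nil => rfl
  | cons hadj q ih => exact congrArg (· + 1) (ih _)

@[simp] lemma induceW_support {a b : V} (p : G.Walk a b) (h : ∀ x ∈ p.support, x ∈ A) :
    (induceW p h).support.map Subtype.val = p.support := by
  induction p with
  | nil => rfl
  | cons hadj q ih => exact congrArg (List.cons _) (ih _)

@[simp] lemma induceW_edges {a b : V} (p : G.Walk a b) (h : ∀ x ∈ p.support, x ∈ A) :
    (induceW p h).edges.map (Sym2.map Subtype.val) = p.edges := by
  induction p with
  | nil => rfl
  | cons hadj q ih => exact congrArg (List.cons _) (ih _)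

lemma induceW_isCycle {a : V} (p : G.Walk a a) (h : ∀ x ∈ p.support, x ∈ A)
    (hp : p.IsCycle) : (induceW p h).IsCycle := by
  constructor
  · constructor
    · constructor
      have := hp.isCircuit.isTrail.edges_nodup
      rw [← induceW_edges p h] at this
      exact this.of_map _
    · intro hnil
      have h0 := hp.three_le_length
      have : (induceW p h).length = 0 := by rw [hnil]; rfl
      rw [induceW_length] at this
      omega
  · have := hp.support_nodup
    rw [← induceW_support p h, ← List.map_tail] at this
    exact this.of_map _

end AuxWalk

section AuxMatch
variable {V : Type*}


lemma matching_verts_ncard [Fintype V] {G : SimpleGraph V} {M : G.Subgraph}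
    (h : M.IsMatching) : M.verts.ncard = 2 * M.edgeSet.ncard := by
  classical
  have hdeg : ∀ (v : M.verts) (inst : Fintype (M.coe.neighborSet v)),
      @SimpleGraph.degree _ M.coe v inst = 1 := by
    intro v inst
    have e : @SimpleGraph.degree _ M.coe v inst = M.degree ↑v := by
      convert M.coe_degree v
    rw [e]
    have := (Subgraph.isMatching_iff_forall_degree.1 h) _ v.2
    convert this
  have hsum := M.coe.sum_degrees_eq_twice_card_edges
  have hsum2 : (Fintype.card M.verts : ℕ) = 2 * M.coe.edgeFinset.card := by
    calc (Fintype.card M.verts : ℕ) = ∑ _v : M.verts, 1 := by simp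
    _ = ∑ v : M.verts, @SimpleGraph.degree _ M.coe v (M.coe.neighborSetFintype v) :=
      Finset.sum_congr rfl (fun v _ => (hdeg v _).symm)
    _ = 2 * M.coe.edgeFinset.card := hsum
  have h1 : M.verts.ncard = Fintype.card M.verts := by
    rw [Set.ncard_eq_toFinset_card', Set.toFinset_card]
  have h2 : (M.coe.edgeFinset.card : ℕ) = M.coe.edgeSet.ncard := by
    rw [Set.ncard_eq_toFinset_card']
    congr 1
  have h3 : M.coe.edgeSet.ncard = M.edgeSet.ncard := by
    rw [← M.image_coe_edgeSet_coe]
    exact (Set.ncard_image_of_injective _ (Sym2.map.injective Subtype.val_injective)).symm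
  rw [h1, hsum2, h2, h3]

lemma two_mul_matchNum [Fintype V] {G : SimpleGraph V} (h : HasPM G) :
    2 * matchNum G = Nat.card V := by
  classical
  set S := {n | ∃ M : G.Subgraph, M.IsMatching ∧ M.edgeSet.ncard = n} with hS
  have hbound : ∀ n ∈ S, 2 * n ≤ Nat.card V := by
    rintro n ⟨M, hM, rfl⟩
    rw [← matching_verts_ncard hM, ← Set.ncard_univ]
    exact Set.ncard_le_ncard (Set.subset_univ _) (Set.finite_univ)
  have hbdd : BddAbove S := by
    refine ⟨Nat.card V, fun n hn => ?_⟩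
    have := hbound n hn
    omega
  have hne : S.Nonempty := by
    refine ⟨0, ⊥, ?_, ?_⟩
    · intro v hv
      simp [Subgraph.verts_bot] at hv
    · simp [Subgraph.edgeSet_bot]
  have hmem : matchNum G ∈ S := Nat.sSup_mem hne hbdd
  have hle : 2 * matchNum G ≤ Nat.card V := hbound _ hmem
  obtain ⟨Mp, hMp⟩ := h
  have hcard : 2 * Mp.edgeSet.ncard = Nat.card V := by
    rw [← matching_verts_ncard hMp.1, hMp.2.verts_eq_univ, Set.ncard_univ]
  have hge : Mp.edgeSet.ncard ≤ matchNum G := le_csSup hbdd ⟨Mp, hMp.1, rfl⟩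
  omega


end AuxMatch

/-- If `H = G[A]` is Egerváry, `R = G[B]` is a matchable KE graph (with `A`, `B`
partitioning the vertices), `I` is a maximum independent set of `R`, and every edge of
`G` between `A` and `B` joins `A` to `N_R(I)`, then `G` is Egerváry. -/
theorem egervary_of_KE_extension {V : Type*} [Fintype V] (G : SimpleGraph V)
    (A B : Set V) (hdisj : Disjoint A B) (hunion : A ∪ B = Set.univ)
    (hHpm : HasPM (G.induce A)) (hHeg : IsEgervary (G.induce A))
    (hRpm : HasPM (G.induce B)) (hRKE : IsKE (G.induce B))
    (I : Set V) (hIB : I ⊆ B) (hIind : IsIndep G I)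
    (hImax : I.ncard = alphaNum (G.induce B))
    (hcross : ∀ x ∈ A, ∀ y ∈ B, G.Adj x y → y ∉ I ∧ ∃ z ∈ I, G.Adj y z) :
    IsEgervary G := by
  classical
  rintro ⟨M, k, w, C, hk, hM, hCyc, hCdisj, hCM, hcover⟩
  haveI : Fintype B := B.toFinite.fintype
  have hmemAB : ∀ x : V, x ∈ A ∨ x ∈ B := by
    intro x
    have : x ∈ A ∪ B := by rw [hunion]; exact Set.mem_univ x
    exact this
  -- cardinalities
  have hpm2 : 2 * matchNum (G.induce B) = Nat.card B := two_mul_matchNum hRpm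
  have hIB2 : I.ncard + matchNum (G.induce B) = Nat.card B := by
    rw [hImax]; exact hRKE
  have hBcard : Nat.card B = B.ncard := Nat.card_coe_set_eq B
  have h2I : 2 * I.ncard = B.ncard := by omega
  have hJcard : (B \ I).ncard = I.ncard := by
    have h1 : (B \ I).ncard = B.ncard - I.ncard := Set.ncard_diff hIB (B.toFinite.subset hIB)
    have h2 : I.ncard ≤ B.ncard := Set.ncard_le_ncard hIB B.toFinite
    omega
  -- neighbors of I lie in B \ I
  have hN : ∀ x y : V, G.Adj x y → y ∈ I → x ∈ B \ I := by
    intro x y hadj hyI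
    rcases hmemAB x with hxA | hxB
    · exact absurd hyI (hcross x hxA y (hIB hyI) hadj).1
    · refine ⟨hxB, fun hxI => ?_⟩
      exact hIind x hxI y hyI hadj
  have hlen : ∀ i, 0 < (C i).length := fun i => by
    have := (hCyc i).1.three_le_length; omega
  -- the injection from I into B \ I
  set F : V → V := fun v =>
    if hv : v ∈ M.verts then (hM hv).choose
    else if hc : ∃ i, v ∈ (C i).support then cycNext (C hc.choose) v else v with hF
  have FM : ∀ v (hv : v ∈ M.verts), M.Adj v (F v) := by
    intro v hv
    rw [hF]
    simp only [dif_pos hv]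
    exact (hM hv).choose_spec.1
  have FCy : ∀ v, v ∉ M.verts → ∀ i, v ∈ (C i).support → F v = cycNext (C i) v := by
    intro v hv i hvi
    have hc : ∃ j, v ∈ (C j).support := ⟨i, hvi⟩
    have hji : hc.choose = i := by
      by_contra hne
      exact hCdisj _ _ hne v hc.choose_spec hvi
    rw [hF]
    simp only [dif_neg hv, dif_pos hc]
    exact congrArg (fun j => cycNext (C j) v) hji
  have hFJ : ∀ v ∈ I, F v ∈ B \ I := by
    intro v hvI
    by_cases hv : v ∈ M.verts
    · exact hN _ _ (M.adj_sub (FM v hv)).symm hvI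
    · obtain ⟨i, hvi⟩ := (hcover v).resolve_left hv
      rw [FCy v hv i hvi]
      exact hN _ _ (cycNext_adj (hlen i) hvi).symm hvI
  have hFinj : Set.InjOn F I := by
    intro v hvI v' hvI' heq
    by_cases hv : v ∈ M.verts <;> by_cases hv' : v' ∈ M.verts
    · have h1 := FM v hv
      have h2 := FM v' hv'
      rw [heq] at h1
      have hw : F v' ∈ M.verts := M.edge_vert h2.symm
      obtain ⟨z, hz, hu⟩ := hM hw
      rw [hu v h1.symm, hu v' h2.symm]
    · obtain ⟨i, hvi'⟩ := (hcover v').resolve_left hv'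
      rw [FCy v' hv' i hvi'] at heq
      have : F v ∈ M.verts := M.edge_vert (FM v hv).symm
      rw [heq] at this
      exact absurd this (hCM i _ (cycNext_mem (hlen i) hvi'))
    · obtain ⟨i, hvi⟩ := (hcover v).resolve_left hv
      rw [FCy v hv i hvi] at heq
      have : F v' ∈ M.verts := M.edge_vert (FM v' hv').symm
      rw [← heq] at this
      exact absurd this (hCM i _ (cycNext_mem (hlen i) hvi))
    · obtain ⟨i, hvi⟩ := (hcover v).resolve_left hv
      obtain ⟨j, hvj'⟩ := (hcover v').resolve_left hv'
      rw [FCy v hv i hvi, FCy v' hv' j hvj'] at heq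
      have hij : i = j := by
        by_contra hne
        have h1 : cycNext (C i) v ∈ (C i).support := cycNext_mem (hlen i) hvi
        have h2 : cycNext (C j) v' ∈ (C j).support := cycNext_mem (hlen j) hvj'
        rw [heq] at h1
        exact hCdisj i j hne _ h1 h2
      subst hij
      exact cycNext_injOn (hCyc i).1 hvi hvj' heq
  have himage : F '' I = B \ I := by
    refine Set.eq_of_subset_of_ncard_le ?_ ?_ ((B.toFinite.subset Set.diff_subset))
    · rintro _ ⟨v, hvI, rfl⟩
      exact hFJ v hvI
    · rw [Set.ncard_image_of_injOn hFinj, hJcard]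
  have hsurj : ∀ y ∈ B \ I, ∃ v, v ∈ I ∧ F v = y := by
    intro y hy
    rw [← himage] at hy
    obtain ⟨v, hvI, hvy⟩ := hy
    exact ⟨v, hvI, hvy⟩
  -- a vertex of B \ I on a cycle is the cycle-successor of a vertex of I on that cycle
  have hcycpre : ∀ i, ∀ y ∈ (C i).support, y ∈ B \ I →
      ∃ v, v ∈ I ∧ v ∈ (C i).support ∧ cycNext (C i) v = y := by
    intro i y hyC hyJ
    obtain ⟨v, hvI, hvy⟩ := hsurj y hyJ
    by_cases hv : v ∈ M.verts
    · have : y ∈ M.verts := by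
        rw [← hvy]
        exact M.edge_vert (FM v hv).symm
      exact absurd this (hCM i y hyC)
    · obtain ⟨j, hvj⟩ := (hcover v).resolve_left hv
      rw [FCy v hv j hvj] at hvy
      have hyj : y ∈ (C j).support := by
        rw [← hvy]
        exact cycNext_mem (hlen j) hvj
      have hij : j = i := by
        by_contra hne
        exact hCdisj j i hne y hyj hyC
      subst hij
      exact ⟨v, hvI, hvj, hvy⟩
  -- no cycle meets B
  have hnoI : ∀ i, ∀ x ∈ (C i).support, x ∉ I := by
    intro i
    refine parity_no_I (hCyc i).1 (hCyc i).2 (J := B \ I) ?_ hN (hcycpre i)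
    exact fun x hx hx' => hx'.2 hx
  have hnoB : ∀ i, ∀ x ∈ (C i).support, x ∉ B := by
    intro i x hx hxB
    by_cases hxI : x ∈ I
    · exact hnoI i x hx hxI
    · obtain ⟨v, hvI, hvC, _⟩ := hcycpre i x hx ⟨hxB, hxI⟩
      exact hnoI i v hvC hvI
  have hsuppA : ∀ i, ∀ x ∈ (C i).support, x ∈ A := by
    intro i x hx
    exact (hmemAB x).resolve_right (hnoB i x hx)
  -- every vertex of B is matched, within B
  have hBM : ∀ x ∈ B, x ∈ M.verts := by
    intro x hxB
    rcases hcover x with h | ⟨i, hi⟩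
    · exact h
    · exact absurd hxB (hnoB i x hi)
  have hJmatchI : ∀ y ∈ B \ I, ∃ v, v ∈ I ∧ M.Adj v y := by
    intro y hy
    obtain ⟨v, hvI, hvy⟩ := hsurj y hy
    by_cases hv : v ∈ M.verts
    · exact ⟨v, hvI, hvy ▸ FM v hv⟩
    · obtain ⟨j, hvj⟩ := (hcover v).resolve_left hv
      rw [FCy v hv j hvj] at hvy
      have : y ∈ (C j).support := by
        rw [← hvy]; exact cycNext_mem (hlen j) hvj
      exact absurd hy.1 (hnoB j y this)
  have hBmatchB : ∀ x ∈ B, ∀ y, M.Adj x y → y ∈ B := by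
    intro x hxB y hxy
    by_cases hxI : x ∈ I
    · have hxM : x ∈ M.verts := hBM x hxB
      obtain ⟨z, hz, hu⟩ := hM hxM
      have h1 : y = z := hu y hxy
      have h2 : F x = z := hu (F x) (FM x hxM)
      have : F x ∈ B \ I := hFJ x hxI
      rw [h2] at this
      rw [h1]
      exact this.1
    · obtain ⟨v, hvI, hvx⟩ := hJmatchI x ⟨hxB, hxI⟩
      obtain ⟨z, hz, hu⟩ := hM (hBM x hxB)
      have h1 : y = z := hu y hxy
      have h2 : v = z := hu v hvx.symm
      rw [h1, ← h2]
      exact hIB hvI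
  -- build an odd cycle cover of G[A]
  apply hHeg
  refine ⟨⟨{x : A | (x : V) ∈ M.verts}, fun x y => M.Adj x y, ?_, ?_, ?_⟩, k,
    fun i => ⟨w i, hsuppA i (w i) (C i).start_mem_support⟩,
    fun i => induceW (C i) (hsuppA i), hk, ?_, ?_, ?_, ?_, ?_⟩
  · intro x y h
    exact M.adj_sub h
  · intro x y h
    exact M.edge_vert h
  · refine ⟨fun x y h => ?_⟩
    exact M.adj_symm h
  · -- matching
    rintro ⟨x, hxA⟩ hx
    simp only [Set.mem_setOf_eq] at hx
    obtain ⟨z, hz, hu⟩ := hM hx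
    have hzA : z ∈ A := by
      rcases hmemAB z with h | hzB
      · exact h
      · have : x ∈ B := hBmatchB z hzB x hz.symm
        exact absurd (Set.mem_inter hxA this) (by
          rw [Set.disjoint_iff_inter_eq_empty] at hdisj
          rw [hdisj]
          exact fun h => h.elim)
    refine ⟨⟨z, hzA⟩, hz, ?_⟩
    rintro ⟨y, hyA⟩ hy
    exact Subtype.ext (hu y hy)
  · -- cycles, odd
    intro i
    refine ⟨induceW_isCycle _ _ (hCyc i).1, ?_⟩
    rw [induceW_length]
    exact (hCyc i).2
  · -- disjoint
    intro i j hij x hxi hxj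
    have h1 : (x : V) ∈ (C i).support := by
      rw [← induceW_support (C i) (hsuppA i)]
      exact List.mem_map_of_mem hxi
    have h2 : (x : V) ∈ (C j).support := by
      rw [← induceW_support (C j) (hsuppA j)]
      exact List.mem_map_of_mem hxj
    exact hCdisj i j hij _ h1 h2
  · -- cycles avoid matching
    intro i x hx hxM
    have h1 : (x : V) ∈ (C i).support := by
      rw [← induceW_support (C i) (hsuppA i)]
      exact List.mem_map_of_mem hx
    exact hCM i _ h1 hxM
  · -- cover
    rintro ⟨x, hxA⟩
    rcases hcover x with h | ⟨i, hi⟩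
    · left
      exact h
    · right
      refine ⟨i, ?_⟩
      have : x ∈ (induceW (C i) (hsuppA i)).support.map Subtype.val := by
        rw [induceW_support]
        exact hi
      obtain ⟨y, hy, hyx⟩ := List.mem_map.1 this
      have : y = ⟨x, hxA⟩ := Subtype.ext hyx
      rwa [this] at hy
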